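/- Let G be a finite simple graph on n vertices with minimum degree δ ≥ 3. Then every edge 2-coloring of G uses at most (n/2)·(1 + 2/δ) colors; equivalently, if c is the number of colors of an edge 2-coloring of G, then 2·c·δ ≤ n·(δ + 2). -/
import Mathlib


open SimpleGraph

/-- `C` is an edge 2-coloring of `G`: for every vertex, the edges incident to it
carry at most 2 distinct colors. -/
def IsEdge2Coloring {V : Type*} (G : SimpleGraph V) (C : Sym2 V → ℕ) : Prop :=
  ∀ v : V, (C '' G.incidenceSet v).ncard ≤ 2

/-- The number of distinct colors used by a coloring `C` on the edges of `G`. -/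
noncomputable def numColors {V : Type*} (G : SimpleGraph V) (C : Sym2 V → ℕ) : ℕ :=
  (C '' G.edgeSet).ncard

/-- `OPT G`: the maximum number of colors used by an edge 2-coloring of `G`. -/
noncomputable def OPT {V : Type*} (G : SimpleGraph V) : ℕ :=
  sSup {n : ℕ | ∃ C : Sym2 V → ℕ, IsEdge2Coloring G C ∧ numColors G C = n}

/-- `M` is a matching of `G`, given as a set of edges: the edges belong to `G` and
are pairwise vertex-disjoint. -/
def IsMatchingSet {V : Type*} (G : SimpleGraph V) (M : Set (Sym2 V)) : Prop :=
  M ⊆ G.edgeSet ∧ ∀ e ∈ M, ∀ f ∈ M, e ≠ f → ∀ v : V, v ∈ e → v ∉ f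

/-- `ALG G M`: number of colors produced by the matching based algorithm, i.e.
`|M|` plus the number of connected components of `G − M`. -/
noncomputable def ALG {V : Type*} (G : SimpleGraph V) (M : Set (Sym2 V)) : ℕ :=
  M.ncard + Nat.card (G.deleteEdges M).ConnectedComponent

/-- `H` is a characteristic subgraph of `G` with respect to the coloring `C`:
a subgraph of `G` containing exactly one edge of each color used by `C`. -/
def IsCharSubgraph {V : Type*} (G : SimpleGraph V) (C : Sym2 V → ℕ)
    (H : SimpleGraph V) : Prop :=
  H ≤ G ∧ ∀ c ∈ C '' G.edgeSet, ∃! e, e ∈ H.edgeSet ∧ C e = c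

/-- A graph on `n` vertices with minimum degree `δ ≥ 3` admits no edge 2-coloring with
more than `(n/2)(1 + 2/δ)` colors: `2·c·δ ≤ n·(δ + 2)`. -/
private lemma quad_ineq (δ : ℕ) (hδ3 : 3 ≤ δ) (x y A B : ℚ)
    (hx : 2 ≤ x) (hy : 2 ≤ y) (hxy : (δ : ℚ) + 2 ≤ x + y)
    (hA : x ≤ A) (hB : y ≤ B) :
    A⁻¹ + B⁻¹ ≤ ((δ : ℚ) + 2) / (2 * δ) := by
  have hδQ : (3 : ℚ) ≤ (δ : ℚ) := by exact_mod_cast hδ3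
  have hx0 : (0:ℚ) < x := by linarith
  have hy0 : (0:ℚ) < y := by linarith
  have hA0 : (0:ℚ) < A := by linarith
  have hB0 : (0:ℚ) < B := by linarith
  have h1 : A⁻¹ ≤ x⁻¹ := by gcongr
  have h2 : B⁻¹ ≤ y⁻¹ := by gcongr
  have h3 : x⁻¹ + y⁻¹ = (x + y) / (x * y) := by field_simp; ring
  have key : (x + y) / (x * y) ≤ ((δ : ℚ) + 2) / (2 * δ) := by
    rw [div_le_div_iff₀ (by positivity) (by positivity)]
    nlinarith [mul_nonneg (sub_nonneg.2 hx) (sub_nonneg.2 hy)]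
  linarith [h1, h2, key, h3.le, h3.ge]

theorem numColors_le_of_minDegree {V : Type*} [Fintype V] (G : SimpleGraph V) (δ : ℕ)
    (hδ3 : 3 ≤ δ) (hδ : ∀ v : V, δ ≤ (G.neighborSet v).ncard)
    (C : Sym2 V → ℕ) (hC : IsEdge2Coloring G C) :
    2 * numColors G C * δ ≤ Fintype.card V * (δ + 2) := by
  classical
  have hfinE : G.edgeSet.Finite := Set.toFinite _
  set K : Finset ℕ := hfinE.toFinset.image C with hKdef
  have hKcard : numColors G C = K.card := by
    rw [numColors, ← Set.ncard_coe_finset, hKdef, Finset.coe_image,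
      Set.Finite.coe_toFinset]
  set Vi : ℕ → Finset V :=
    fun i => Finset.univ.filter (fun v => ∃ e ∈ G.incidenceSet v, C e = i) with hVidef
  have hmemVi : ∀ i v, v ∈ Vi i ↔ ∃ e ∈ G.incidenceSet v, C e = i := by
    intro i v; simp [hVidef]
  -- every incident edge is of the form s(v,u)
  have hedge_of_inc : ∀ (v : V) (i : ℕ), (∃ e ∈ G.incidenceSet v, C e = i) →
      ∃ u, G.Adj v u ∧ C s(v, u) = i := by
    rintro v i ⟨e, he, hce⟩
    induction e using Sym2.ind with
    | _ x y =>
      rcases G.mk'_mem_incidenceSet_iff.1 he with ⟨hadj, h | h⟩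
      · subst h; exact ⟨y, hadj, hce⟩
      · subst h; exact ⟨x, hadj.symm, by rwa [Sym2.eq_swap]⟩
  -- palette
  set Pal : V → Finset ℕ := fun v => K.filter (fun i => v ∈ Vi i) with hPaldef
  have hPalmem : ∀ v i, i ∈ Pal v ↔ ∃ e ∈ G.incidenceSet v, C e = i := by
    intro v i
    constructor
    · intro h
      exact (hmemVi i v).1 (Finset.mem_filter.1 h).2
    · rintro ⟨e, he, hce⟩
      refine Finset.mem_filter.2 ⟨?_, (hmemVi i v).2 ⟨e, he, hce⟩⟩
      exact Finset.mem_image.2 ⟨e, hfinE.mem_toFinset.2 (G.incidenceSet_subset v he), hce⟩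
  have hPalcard : ∀ v, (Pal v).card ≤ 2 := by
    intro v
    have hsub : (↑(Pal v) : Set ℕ) ⊆ C '' G.incidenceSet v := by
      intro i hi
      rcases (hPalmem v i).1 hi with ⟨e, he, hce⟩
      exact ⟨e, he, hce⟩
    calc (Pal v).card = (↑(Pal v) : Set ℕ).ncard := (Set.ncard_coe_finset _).symm
      _ ≤ (C '' G.incidenceSet v).ncard :=
          Set.ncard_le_ncard hsub ((Set.toFinite _).image C)
      _ ≤ 2 := hC v
  -- neighbor finsets per color
  set Nif : V → ℕ → Finset V :=
    fun v i => (G.neighborFinset v).filter (fun u => C s(v, u) = i) with hNifdef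
  have hNif_card : ∀ v i, v ∈ Vi i → (Nif v i).card + 1 ≤ (Vi i).card := by
    intro v i hv
    have hsub : insert v (Nif v i) ⊆ Vi i := by
      intro u hu
      rcases Finset.mem_insert.1 hu with rfl | hu
      · exact hv
      · rw [hNifdef] at hu
        rcases Finset.mem_filter.1 hu with ⟨hadj, hc⟩
        rw [SimpleGraph.mem_neighborFinset] at hadj
        refine (hmemVi i u).2 ⟨s(v, u), ?_, hc⟩
        exact G.mk'_mem_incidenceSet_right_iff.2 hadj
    have hnm : v ∉ Nif v i := by
      rw [hNifdef]
      simp [SimpleGraph.mem_neighborFinset]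
    calc (Nif v i).card + 1 = (insert v (Nif v i)).card :=
          (Finset.card_insert_of_notMem hnm).symm
      _ ≤ (Vi i).card := Finset.card_le_card hsub
  have hNif_ne : ∀ v i, i ∈ Pal v → 1 ≤ (Nif v i).card := by
    intro v i hi
    obtain ⟨u, hadj, hcu⟩ := hedge_of_inc v i ((hPalmem v i).1 hi)
    refine Finset.card_pos.2 ⟨u, ?_⟩
    rw [hNifdef]
    exact Finset.mem_filter.2 ⟨(SimpleGraph.mem_neighborFinset _ _ _).2 hadj, hcu⟩
  -- per-vertex bound
  have hvert : ∀ v : V, ∑ i ∈ Pal v, ((Vi i).card : ℚ)⁻¹ ≤ ((δ : ℚ) + 2) / (2 * δ) := by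
    intro v
    have hδQ : (3 : ℚ) ≤ (δ : ℚ) := by exact_mod_cast hδ3
    have hc2 := hPalcard v
    obtain h | h | h : (Pal v).card = 0 ∨ (Pal v).card = 1 ∨ (Pal v).card = 2 := by omega
    · rw [Finset.card_eq_zero.1 h, Finset.sum_empty]
      positivity
    · obtain ⟨i, hi⟩ := Finset.card_eq_one.1 h
      rw [hi, Finset.sum_singleton]
      have hiv : i ∈ Pal v := by rw [hi]; exact Finset.mem_singleton_self i
      have hvVi : v ∈ Vi i := (Finset.mem_filter.1 hiv).2
      have h2 : 2 ≤ (Vi i).card := by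
        have := hNif_card v i hvVi
        have := hNif_ne v i hiv
        omega
      have h2Q : (2 : ℚ) ≤ ((Vi i).card : ℚ) := by exact_mod_cast h2
      have hinv : ((Vi i).card : ℚ)⁻¹ ≤ 2⁻¹ := by gcongr
      have hhalf : (2 : ℚ)⁻¹ ≤ ((δ : ℚ) + 2) / (2 * δ) := by
        rw [le_div_iff₀ (by positivity : (0:ℚ) < 2 * (δ:ℚ))]
        nlinarith
      linarith
    · obtain ⟨i, j, hij, hS⟩ := Finset.card_eq_two.1 h
      have hiv : i ∈ Pal v := by rw [hS]; simp
      have hjv : j ∈ Pal v := by rw [hS]; simp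
      rw [hS, Finset.sum_pair hij]
      -- neighbors covered by the two colors
      have hcover : G.neighborFinset v ⊆ Nif v i ∪ Nif v j := by
        intro u hu
        have hadj : G.Adj v u := (SimpleGraph.mem_neighborFinset _ _ _).1 hu
        have hcu : C s(v, u) ∈ Pal v :=
          (hPalmem v _).2 ⟨s(v, u), G.mk'_mem_incidenceSet_left_iff.2 hadj, rfl⟩
        rw [hS] at hcu
        rcases Finset.mem_insert.1 hcu with hc | hc
        · exact Finset.mem_union_left _
            (Finset.mem_filter.2 ⟨hu, hc⟩)
        · exact Finset.mem_union_right _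
            (Finset.mem_filter.2 ⟨hu, Finset.mem_singleton.1 hc⟩)
      have hdegv : δ ≤ (G.neighborFinset v).card := by
        have h := hδ v
        have e : (G.neighborSet v).ncard = (G.neighborFinset v).card := by
          rw [SimpleGraph.neighborFinset_def, Set.ncard_eq_toFinset_card']
        omega
      have hsum : δ ≤ (Nif v i).card + (Nif v j).card := by
        calc δ ≤ (G.neighborFinset v).card := hdegv
          _ ≤ (Nif v i ∪ Nif v j).card := Finset.card_le_card hcover
          _ ≤ (Nif v i).card + (Nif v j).card := Finset.card_union_le _ _
      have hAi := hNif_card v i (Finset.mem_filter.1 hiv).2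
      have hAj := hNif_card v j (Finset.mem_filter.1 hjv).2
      have hni := hNif_ne v i hiv
      have hnj := hNif_ne v j hjv
      exact quad_ineq δ hδ3 ((Nif v i).card + 1) ((Nif v j).card + 1)
        ((Vi i).card) ((Vi j).card)
        (by exact_mod_cast Nat.add_le_add_right hni 1)
        (by exact_mod_cast Nat.add_le_add_right hnj 1)
        (by
          have h : δ + 2 ≤ (Nif v i).card + 1 + ((Nif v j).card + 1) := by omega
          exact_mod_cast h)
        (by exact_mod_cast hAi) (by exact_mod_cast hAj)
  -- summation
  have hVi_ne : ∀ i ∈ K, 0 < (Vi i).card := by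
    intro i hi
    rcases Finset.mem_image.1 hi with ⟨e, he, hce⟩
    have heE : e ∈ G.edgeSet := hfinE.mem_toFinset.1 he
    induction e using Sym2.ind with
    | _ x y =>
      refine Finset.card_pos.2 ⟨x, (hmemVi i x).2 ⟨s(x, y), ?_, hce⟩⟩
      exact G.mk'_mem_incidenceSet_left_iff.2 (G.mem_edgeSet.1 heE)
  have key : (K.card : ℚ) ≤ (Fintype.card V : ℚ) * (((δ : ℚ) + 2) / (2 * δ)) := by
    calc (K.card : ℚ) = ∑ i ∈ K, (1 : ℚ) := by simp
      _ = ∑ i ∈ K, ∑ v ∈ Vi i, ((Vi i).card : ℚ)⁻¹ := by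
          refine Finset.sum_congr rfl fun i hi => ?_
          rw [Finset.sum_const, nsmul_eq_mul]
          have h0 : ((Vi i).card : ℚ) ≠ 0 := by
            exact_mod_cast (hVi_ne i hi).ne'
          field_simp
      _ = ∑ i ∈ K, ∑ v : V, if v ∈ Vi i then ((Vi i).card : ℚ)⁻¹ else 0 := by
          refine Finset.sum_congr rfl fun i hi => ?_
          rw [Finset.sum_ite_mem, Finset.univ_inter]
      _ = ∑ v : V, ∑ i ∈ K, if v ∈ Vi i then ((Vi i).card : ℚ)⁻¹ else 0 :=
          Finset.sum_comm
      _ = ∑ v : V, ∑ i ∈ Pal v, ((Vi i).card : ℚ)⁻¹ := by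
          refine Finset.sum_congr rfl fun v _ => ?_
          rw [hPaldef, Finset.sum_filter]
      _ ≤ ∑ v : V, ((δ : ℚ) + 2) / (2 * δ) := Finset.sum_le_sum fun v _ => hvert v
      _ = (Fintype.card V : ℚ) * (((δ : ℚ) + 2) / (2 * δ)) := by
          rw [Finset.sum_const, Finset.card_univ, nsmul_eq_mul]
  -- conclude
  have hδ0 : (0 : ℚ) < (δ : ℚ) := by
    have : 0 < δ := by omega
    exact_mod_cast this
  have key2 : (K.card : ℚ) * (2 * δ) ≤ (Fintype.card V : ℚ) * ((δ : ℚ) + 2) := by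
    have h := mul_le_mul_of_nonneg_right key (by positivity : (0:ℚ) ≤ 2 * δ)
    have h2 : (Fintype.card V : ℚ) * (((δ : ℚ) + 2) / (2 * δ)) * (2 * δ)
        = (Fintype.card V : ℚ) * ((δ : ℚ) + 2) := by
      field_simp
    linarith
  have final : ((2 * numColors G C * δ : ℕ) : ℚ) ≤ ((Fintype.card V * (δ + 2) : ℕ) : ℚ) := by
    rw [hKcard]
    push_cast
    nlinarith [key2]
  exact_mod_cast final
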